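/- Let σ > 0 and let g : ℝ → ℝ be concave on [0,∞). Let Γ* ≥ 0 and suppose g has derivative γ(Γ*) at Γ* within [0,∞) (a right-derivative when Γ* = 0). If γ(Γ*)·(1 + Γ*/σ²) = g(Γ*)/σ², then Γ* is a global maximizer of F(Γ) = g(Γ)/(1 + Γ/σ²) over [0,∞): for every Γ ≥ 0, g(Γ)/(1 + Γ/σ²) ≤ g(Γ*)/(1 + Γ*/σ²). -/

import Mathlib

theorem stmt_11 (σ : ℝ) (hσ : 0 < σ) (g : ℝ → ℝ)
    (hg : ConcaveOn ℝ (Set.Ici (0 : ℝ)) g)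
    (Γstar γ : ℝ) (hΓstar : 0 ≤ Γstar)
    (hderiv : HasDerivWithinAt g γ (Set.Ici (0 : ℝ)) Γstar)
    (hcond : γ * (1 + Γstar / σ ^ 2) = g Γstar / σ ^ 2) :
    ∀ Γ : ℝ, 0 ≤ Γ → g Γ / (1 + Γ / σ ^ 2) ≤ g Γstar / (1 + Γstar / σ ^ 2) := by
  have hσ2 : (0:ℝ) < σ ^ 2 := by positivity
  intro Γ hΓ
  have htangent : g Γ ≤ g Γstar + γ * (Γ - Γstar) := by
    rcases lt_trichotomy Γ Γstar with h | h | h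
    · have := hg.le_slope_of_hasDerivWithinAt (x := Γ) (y := Γstar) hΓ hΓstar h hderiv
      rw [slope_def_field, le_div_iff₀ (by linarith)] at this
      nlinarith
    · simp [h]
    · have := hg.slope_le_of_hasDerivWithinAt (x := Γstar) (y := Γ) hΓstar hΓ h hderiv
      rw [slope_def_field, div_le_iff₀ (by linarith)] at this
      nlinarith
  have hpos : 0 < 1 + Γ / σ ^ 2 := by positivity
  have hpos' : 0 < 1 + Γstar / σ ^ 2 := by positivity
  have key : g Γstar + γ * (Γ - Γstar) = (g Γstar / (1 + Γstar / σ ^ 2)) * (1 + Γ / σ ^ 2) := by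
    have hc2 : γ * (σ ^ 2 + Γstar) = g Γstar := by
      field_simp at hcond; linarith
    field_simp
    linear_combination (Γ - Γstar) * hc2
  rw [div_le_div_iff₀ hpos hpos']
  have h1 : g Γ ≤ g Γstar / (1 + Γstar / σ ^ 2) * (1 + Γ / σ ^ 2) := key ▸ htangent
  have h2 := mul_le_mul_of_nonneg_right h1 hpos'.le
  have h3 : g Γstar / (1 + Γstar / σ ^ 2) * (1 + Γ / σ ^ 2) * (1 + Γstar / σ ^ 2)
      = g Γstar * (1 + Γ / σ ^ 2) := by
    field_simp
  linarith
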